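/- Constructing temperature observables (Proposition 1): Let T > 0, let H : R^N -> R be differentiable with Z := integral over R^N of exp( -H(x) / T ) dx finite and positive, and let rho denote the Gibbs probability density rho(x) = exp( -H(x) / T ) / Z. Let B : R^N -> R^N be a differentiable vector field such that: (a) the vector field x |-> B(x) * exp( -H(x) / T ) has Lebesgue-integrable divergence whose integral over R^N is zero; (b) 0 < integral <B(x), grad H(x)> rho(x) dx < infinity; and (c) 0 < integral div B(x) rho(x) dx < infinity. Then T = ( integral <B(x), grad H(x)> rho(x) dx ) / ( integral div B(x) rho(x) dx ). -/

import Mathlib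

open MeasureTheory Real

/-- Constructing temperature observables (Proposition 1): for the Gibbs density
`ρ(x) = exp(-H(x)/T) / Z` and a vector field `B` whose product with the Gibbs weight has
vanishing total divergence, the temperature is recovered as the ratio
`T = E_ρ[⟨B, ∇H⟩] / E_ρ[div B]`.  Here `⟨B(x), ∇H(x)⟩ = ∑ⱼ Bⱼ(x) ∂ⱼH(x)` and
`div B = ∑ⱼ ∂ⱼBⱼ`. -/
theorem temperature_observable
    {N : ℕ}
    (T : ℝ) (hT : 0 < T)
    (H : (Fin N → ℝ) → ℝ) (hH : Differentiable ℝ H)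
    (Z : ℝ) (hZdef : Z = ∫ x : Fin N → ℝ, Real.exp (-H x / T))
    (hZint : Integrable (fun x : Fin N → ℝ => Real.exp (-H x / T)))
    (hZpos : 0 < Z)
    (B : (Fin N → ℝ) → (Fin N → ℝ)) (hB : Differentiable ℝ B)
    -- (a) the vector field `x ↦ B(x) exp(-H(x)/T)` has integrable divergence with zero total integral
    (hdivint : Integrable (fun x : Fin N → ℝ =>
      ∑ j, fderiv ℝ (fun y => Real.exp (-H y / T) * B y j) x (Pi.single j 1)))
    (hdivzero : (∫ x : Fin N → ℝ,
      ∑ j, fderiv ℝ (fun y => Real.exp (-H y / T) * B y j) x (Pi.single j 1)) = 0)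
    -- (b) `0 < ∫ ⟨B, ∇H⟩ ρ < ∞`
    (hBgradint : Integrable (fun x : Fin N → ℝ =>
      (∑ j, B x j * fderiv ℝ H x (Pi.single j 1)) * (Real.exp (-H x / T) / Z)))
    (hBgradpos : 0 < ∫ x : Fin N → ℝ,
      (∑ j, B x j * fderiv ℝ H x (Pi.single j 1)) * (Real.exp (-H x / T) / Z))
    -- (c) `0 < ∫ (div B) ρ < ∞`
    (hdivBint : Integrable (fun x : Fin N → ℝ =>
      (∑ j, fderiv ℝ (fun y => B y j) x (Pi.single j 1)) * (Real.exp (-H x / T) / Z)))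
    (hdivBpos : 0 < ∫ x : Fin N → ℝ,
      (∑ j, fderiv ℝ (fun y => B y j) x (Pi.single j 1)) * (Real.exp (-H x / T) / Z)) :
    T = (∫ x : Fin N → ℝ,
          (∑ j, B x j * fderiv ℝ H x (Pi.single j 1)) * (Real.exp (-H x / T) / Z)) /
        (∫ x : Fin N → ℝ,
          (∑ j, fderiv ℝ (fun y => B y j) x (Pi.single j 1)) * (Real.exp (-H x / T) / Z)) := by
  have hTne : T ≠ 0 := ne_of_gt hT
  have hZne : Z ≠ 0 := ne_of_gt hZpos
  have hf : Differentiable ℝ (fun y : Fin N → ℝ => Real.exp (-H y / T)) :=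
    by fun_prop
  have hBj : ∀ j, Differentiable ℝ (fun y : Fin N → ℝ => B y j) := fun j =>
    (ContinuousLinearMap.proj (R := ℝ) (φ := fun _ : Fin N => ℝ) j).differentiable.comp hB
  have hpt : ∀ x : Fin N → ℝ,
      (∑ j, fderiv ℝ (fun y => Real.exp (-H y / T) * B y j) x (Pi.single j 1)) =
      Z * ((∑ j, fderiv ℝ (fun y => B y j) x (Pi.single j 1)) * (Real.exp (-H x / T) / Z)
        - (1 / T) * ((∑ j, B x j * fderiv ℝ H x (Pi.single j 1)) * (Real.exp (-H x / T) / Z))) := by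
    intro x
    have hfd : ∀ v, fderiv ℝ (fun y : Fin N → ℝ => Real.exp (-H y / T)) x v
        = Real.exp (-H x / T) * (-(fderiv ℝ H x v) / T) := by
      intro v
      have h1 : fderiv ℝ (fun y : Fin N → ℝ => Real.exp (-H y / T)) x
          = Real.exp (-H x / T) • fderiv ℝ (fun y => -H y / T) x := by
        exact fderiv_exp (by fun_prop)
      have h2 : fderiv ℝ (fun y : Fin N → ℝ => -H y / T) x
          = -((1 / T) • fderiv ℝ H x) := by
        have : (fun y : Fin N → ℝ => -H y / T) = fun y => -(T⁻¹ • H y) := by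
          funext y; simp [div_eq_inv_mul]
        rw [this, fderiv_fun_neg, fderiv_fun_const_smul (hH x)]
        simp [one_div]
      rw [h1]
      simp [h2]
      ring
    have hterm : ∀ j, fderiv ℝ (fun y => Real.exp (-H y / T) * B y j) x (Pi.single j 1)
        = Real.exp (-H x / T) * fderiv ℝ (fun y => B y j) x (Pi.single j 1)
          + B x j * (Real.exp (-H x / T) * (-(fderiv ℝ H x (Pi.single j 1)) / T)) := by
      intro j
      rw [fderiv_fun_mul (hf.differentiableAt) ((hBj j).differentiableAt)]
      simp [hfd]
      try ring
    calc (∑ j, fderiv ℝ (fun y => Real.exp (-H y / T) * B y j) x (Pi.single j 1))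
        = ∑ j, (Real.exp (-H x / T) * fderiv ℝ (fun y => B y j) x (Pi.single j 1)
            + (B x j * fderiv ℝ H x (Pi.single j 1)) * (-(Real.exp (-H x / T) / T))) := by
          refine Finset.sum_congr rfl fun j _ => ?_
          rw [hterm j]; ring
      _ = Real.exp (-H x / T) * (∑ j, fderiv ℝ (fun y => B y j) x (Pi.single j 1))
            + (∑ j, B x j * fderiv ℝ H x (Pi.single j 1)) * (-(Real.exp (-H x / T) / T)) := by
          rw [Finset.sum_add_distrib, Finset.mul_sum, Finset.sum_mul]
      _ = _ := by field_simp; ring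
  set I1 := ∫ x : Fin N → ℝ,
      (∑ j, B x j * fderiv ℝ H x (Pi.single j 1)) * (Real.exp (-H x / T) / Z) with hI1
  set I2 := ∫ x : Fin N → ℝ,
      (∑ j, fderiv ℝ (fun y => B y j) x (Pi.single j 1)) * (Real.exp (-H x / T) / Z) with hI2
  have key : Z * (I2 - (1 / T) * I1) = 0 := by
    have := hdivzero
    rw [show (fun x : Fin N → ℝ =>
        ∑ j, fderiv ℝ (fun y => Real.exp (-H y / T) * B y j) x (Pi.single j 1)) =
        (fun x => Z * ((∑ j, fderiv ℝ (fun y => B y j) x (Pi.single j 1)) * (Real.exp (-H x / T) / Z)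
          - (1 / T) * ((∑ j, B x j * fderiv ℝ H x (Pi.single j 1)) * (Real.exp (-H x / T) / Z))))
        from funext hpt] at this
    rwa [MeasureTheory.integral_const_mul, integral_sub hdivBint (hBgradint.const_mul _),
      MeasureTheory.integral_const_mul] at this
  have h2 : I2 = (1 / T) * I1 := by
    have := mul_eq_zero.mp key
    rcases this with h | h
    · exact absurd h hZne
    · linarith [sub_eq_zero.mp h]
  rw [h2]
  field_simp
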